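/- Let (X,d) be a compact metric space and (f_n) a sequence of continuous feebly open self-maps of X commuting with a continuous map f : X → X such that Σ_{i=1}^∞ D(f_i, f) < ∞. Let F be a translation-invariant Furstenberg family. If the autonomous system (X,f) is F-transitive, then the non-autonomous system (X, f_{1,∞}) is F-transitive. -/

import Mathlib

open Set

/-- `ncomp f k n = f (k+n-1) ∘ ⋯ ∘ f k`; `ncomp f 1 n = f_1^n`. -/
def ncomp {X : Type*} (f : ℕ → X → X) (k : ℕ) : ℕ → X → X
  | 0 => id
  | n + 1 => f (k + n) ∘ ncomp f k n

/-- Supremum metric. -/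
noncomputable def supDist {X : Type*} [MetricSpace X] (g h : X → X) : ℝ :=
  ⨆ x, dist (g x) (h x)

/-- A map is feebly open if images of non-empty open sets have non-empty interior. -/
def FeeblyOpen {X : Type*} [TopologicalSpace X] (g : X → X) : Prop :=
  ∀ U : Set X, IsOpen U → U.Nonempty → (interior (g '' U)).Nonempty

/-- Hitting-time set of the non-autonomous system `f_{k,∞}`. -/
def hitSet {X : Type*} (f : ℕ → X → X) (k : ℕ) (U V : Set X) : Set ℕ :=
  {n : ℕ | (ncomp f k n '' U ∩ V).Nonempty}

/-- Hitting-time set of the autonomous system generated by `g`. -/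
def hitSetAut {X : Type*} (g : X → X) (U V : Set X) : Set ℕ :=
  {n : ℕ | (g^[n] '' U ∩ V).Nonempty}

/-- Furstenberg family: upward hereditary. -/
def IsFurstenbergFamily (F : Set (Set ℕ)) : Prop :=
  ∀ A B : Set ℕ, A ⊆ B → A ∈ F → B ∈ F

/-- Translation invariance of a Furstenberg family. -/
def TranslationInvariant (F : Set (Set ℕ)) : Prop :=
  ∀ S ∈ F, ∀ i : ℕ, ((fun n => n + i) '' S) ∈ F ∧ ((fun n => n - i) '' S) ∈ F

lemma ncomp_add {X : Type*} (f : ℕ → X → X) (k m n : ℕ) :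
    ncomp f k (m + n) = ncomp f (k + m) n ∘ ncomp f k m := by
  induction n with
  | zero => rfl
  | succ n ih =>
    show ncomp f k (m + n + 1) = _
    funext x
    simp [ncomp, ih, Function.comp, Nat.add_assoc]

lemma dist_le_supDist {X : Type*} [MetricSpace X] [CompactSpace X] {g h : X → X}
    (hg : Continuous g) (hh : Continuous h) (x : X) :
    dist (g x) (h x) ≤ supDist g h :=
  le_ciSup (isCompact_range (hg.dist hh)).bddAbove x

lemma supDist_nonneg {X : Type*} [MetricSpace X] (g h : X → X) : 0 ≤ supDist g h :=
  Real.iSup_nonneg fun _ => dist_nonneg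

lemma ncomp_dist_le {X : Type*} [MetricSpace X] [CompactSpace X]
    (f : ℕ → X → X) (hc : ∀ n, Continuous (f n))
    (g : X → X) (hg : Continuous g) (hcomm : ∀ n, g ∘ f n = f n ∘ g) :
    ∀ n k x, dist (ncomp f k n x) (g^[n] x) ≤ ∑ i ∈ Finset.range n, supDist (f (k + i)) g := by
  have hcomm' : ∀ m n x, g^[n] (f m x) = f m (g^[n] x) := by
    intro m n
    induction n with
    | zero => intro x; rfl
    | succ n ih =>
      intro x
      rw [Function.iterate_succ_apply', ih,
        show g (f m (g^[n] x)) = f m (g (g^[n] x)) from congrFun (hcomm m) _,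
        Function.iterate_succ_apply' g n x]
  intro n
  induction n with
  | zero => intro k x; simp [ncomp]
  | succ n ih =>
    intro k x
    have h1 : ncomp f k (n + 1) x = ncomp f (k + 1) n (f k x) := by
      rw [Nat.add_comm n 1, ncomp_add]; rfl
    rw [h1]
    have h2 : dist (g^[n] (f k x)) (g^[n+1] x) ≤ supDist (f k) g := by
      rw [hcomm', Function.iterate_succ_apply']
      exact dist_le_supDist (hc k) hg _
    calc dist (ncomp f (k+1) n (f k x)) (g^[n+1] x)
        ≤ dist (ncomp f (k+1) n (f k x)) (g^[n] (f k x))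
          + dist (g^[n] (f k x)) (g^[n+1] x) := dist_triangle _ _ _
      _ ≤ (∑ i ∈ Finset.range n, supDist (f (k+1+i)) g) + supDist (f k) g :=
          add_le_add (ih (k+1) (f k x)) h2
      _ = ∑ i ∈ Finset.range (n+1), supDist (f (k+i)) g := by
          rw [Finset.sum_range_succ']
          congr 1
          · exact Finset.sum_congr rfl fun i _ => by rw [show k + 1 + i = k + (i + 1) from by omega]

lemma ncomp_feebly {X : Type*} [TopologicalSpace X] (f : ℕ → X → X)
    (hfo : ∀ n, FeeblyOpen (f n)) :
    ∀ n (U : Set X), IsOpen U → U.Nonempty → (interior (ncomp f 1 n '' U)).Nonempty := by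
  intro n
  induction n with
  | zero => intro U hU hUne; simpa [ncomp, hU.interior_eq] using hUne
  | succ n ih =>
    intro U hU hUne
    obtain ⟨w, hw⟩ := ih U hU hUne
    have h2 := hfo (1+n) _ isOpen_interior ⟨w, hw⟩
    refine h2.mono (interior_mono ?_)
    have h1 : ncomp f 1 (n+1) '' U = f (1+n) '' (ncomp f 1 n '' U) := by
      rw [show ncomp f 1 (n+1) = f (1+n) ∘ ncomp f 1 n from rfl, Set.image_comp]
    rw [h1]
    exact Set.image_mono interior_subset


theorem Ftransitive_of_Ftransitive_limit {X : Type*} [MetricSpace X] [CompactSpace X]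
    (f : ℕ → X → X) (hc : ∀ n, Continuous (f n)) (hfo : ∀ n, FeeblyOpen (f n))
    (g : X → X) (hg : Continuous g)
    (hcomm : ∀ n, g ∘ f n = f n ∘ g)
    (hsum : Summable (fun i => supDist (f i) g))
    (F : Set (Set ℕ)) (hF : IsFurstenbergFamily F) (hFt : TranslationInvariant F)
    (htrans : ∀ U V : Set X, IsOpen U → IsOpen V → U.Nonempty → V.Nonempty →
      hitSetAut g U V ∈ F) :
    ∀ U V : Set X, IsOpen U → IsOpen V → U.Nonempty → V.Nonempty →
      hitSet f 1 U V ∈ F := by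
  intro U V hU hV hUne hVne
  obtain ⟨v0, hv0⟩ := hVne
  obtain ⟨δ, hδ, hball⟩ := Metric.isOpen_iff.1 hV v0 hv0
  have hεpos : 0 < δ / 2 := by positivity
  obtain ⟨N, hN⟩ := Filter.eventually_atTop.1
    ((tendsto_sum_nat_add (fun i => supDist (f i) g)).eventually (gt_mem_nhds hεpos))
  have htailN : ∑' i, supDist (f (i + (N + 1))) g < δ / 2 := hN (N + 1) (Nat.le_succ N)
  have hU'ne := ncomp_feebly f hfo N U hU hUne
  have hS : hitSetAut g (interior (ncomp f 1 N '' U)) (Metric.ball v0 (δ / 2)) ∈ F :=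
    htrans _ _ isOpen_interior Metric.isOpen_ball hU'ne ⟨v0, Metric.mem_ball_self hεpos⟩
  refine hF _ _ ?_ ((hFt _ hS N).1)
  rintro m ⟨n, hn, rfl⟩
  simp only [hitSetAut, Set.mem_setOf_eq] at hn
  obtain ⟨y, ⟨u', hu', rfl⟩, hy⟩ := hn
  obtain ⟨x, hx, hxu⟩ := interior_subset hu'
  show (ncomp f 1 (n + N) '' U ∩ V).Nonempty
  refine ⟨ncomp f 1 (n + N) x, ⟨x, hx, rfl⟩, hball ?_⟩
  have e1 : ncomp f 1 (n + N) x = ncomp f (1 + N) n u' := by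
    rw [Nat.add_comm n N, ncomp_add]
    simp only [Function.comp_apply]
    rw [hxu]
  have e2 : dist (ncomp f (1 + N) n u') (g^[n] u')
      ≤ ∑ i ∈ Finset.range n, supDist (f (1 + N + i)) g :=
    ncomp_dist_le f hc g hg hcomm n (1 + N) u'
  have e3 : ∑ i ∈ Finset.range n, supDist (f (1 + N + i)) g
      ≤ ∑' i, supDist (f (i + (N + 1))) g := by
    have hsum' : Summable fun i => supDist (f (i + (N + 1))) g :=
      (summable_nat_add_iff (f := fun i => supDist (f i) g) (N + 1)).2 hsum
    calc ∑ i ∈ Finset.range n, supDist (f (1 + N + i)) g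
        = ∑ i ∈ Finset.range n, supDist (f (i + (N + 1))) g :=
          Finset.sum_congr rfl fun i _ => by
            rw [show 1 + N + i = i + (N + 1) from by omega]
      _ ≤ _ := Summable.sum_le_tsum _ (fun i _ => supDist_nonneg _ _) hsum'
  rw [Metric.mem_ball, e1]
  calc dist (ncomp f (1 + N) n u') v0
      ≤ dist (ncomp f (1 + N) n u') (g^[n] u') + dist (g^[n] u') v0 := dist_triangle _ _ _
    _ < δ / 2 + δ / 2 :=
        add_lt_add (lt_of_le_of_lt (e2.trans e3) htailN) (Metric.mem_ball.1 hy)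
    _ = δ := by ring
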